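/- Let g be analytic and univalent on 𝔻 with convex image, and let f(z) = Σ_{n≥0} b_n z^n be analytic with f ≺ g (f subordinate to g). Then |b_n| ≤ |g'(0)| ≤ 2·dist(g(0), ∂g(𝔻)) for every n ≥ 1. -/

import Mathlib

open Metric Set Filter Complex Function

private lemma stmt13_open_image {g : ℂ → ℂ}
    (hg : DifferentiableOn ℂ g (Metric.ball (0:ℂ) 1))
    (hinj : Set.InjOn g (Metric.ball (0:ℂ) 1)) :
    ∀ s ⊆ Metric.ball (0:ℂ) 1, IsOpen s → IsOpen (g '' s) := by
  have han : AnalyticOnNhd ℂ g (Metric.ball (0:ℂ) 1) := hg.analyticOnNhd isOpen_ball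
  rcases han.is_constant_or_isOpen (convex_ball 0 1).isPreconnected with ⟨v, hv⟩ | h
  · exfalso
    have h0 : (0:ℂ) ∈ Metric.ball (0:ℂ) 1 := by simp
    have h2 : (1/2:ℂ) ∈ Metric.ball (0:ℂ) 1 := by
      rw [mem_ball_zero_iff, show (1/2 : ℂ) = ((1/2 : ℝ) : ℂ) by norm_num, Complex.norm_real,
        Real.norm_eq_abs, _root_.abs_of_nonneg (by norm_num)]
      norm_num
    have := hinj h0 h2 (by rw [hv 0 h0, hv _ h2])
    norm_num at this
  · exact h

private lemma stmt13_inv_diff_at {g : ℂ → ℂ}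
    (hg : DifferentiableOn ℂ g (Metric.ball (0:ℂ) 1))
    (hinj : Set.InjOn g (Metric.ball (0:ℂ) 1)) {z₁ : ℂ} (hz₁ : z₁ ∈ Metric.ball (0:ℂ) 1)
    (hne : deriv g z₁ ≠ 0) :
    DifferentiableAt ℂ (Function.invFunOn g (Metric.ball (0:ℂ) 1)) (g z₁) := by
  have han : AnalyticOnNhd ℂ g (Metric.ball (0:ℂ) 1) := hg.analyticOnNhd isOpen_ball
  have hA : AnalyticAt ℂ g z₁ := han z₁ hz₁
  have hF : HasStrictFDerivAt g (fderiv ℂ g z₁) z₁ := hA.hasStrictFDerivAt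
  have hstrict : HasStrictDerivAt g (deriv g z₁) z₁ := by
    simpa [fderiv_apply_one_eq_deriv] using hF.hasStrictDerivAt
  have hEq := hstrict.hasStrictFDerivAt_equiv hne
  set L := hEq.localInverse _ _ _ with hL
  have hev1 : ∀ᶠ y in nhds (g z₁), g (L y) = y := hEq.eventually_right_inverse
  have hcont : ContinuousAt L (g z₁) := hEq.localInverse_continuousAt
  have himg : L (g z₁) = z₁ := hEq.localInverse_apply_image
  have hev2 : ∀ᶠ y in nhds (g z₁), L y ∈ Metric.ball (0:ℂ) 1 := by
    refine hcont.eventually_mem ?_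
    rw [himg]; exact isOpen_ball.mem_nhds hz₁
  have hev : ∀ᶠ y in nhds (g z₁), Function.invFunOn g (Metric.ball (0:ℂ) 1) y = L y := by
    filter_upwards [hev1, hev2] with y h1 h2
    obtain ⟨z, hz, rfl⟩ : y ∈ g '' Metric.ball (0:ℂ) 1 := ⟨L y, h2, h1⟩
    rw [hinj.leftInvOn_invFunOn hz]
    exact hinj hz h2 h1.symm
  have hdL : DifferentiableAt ℂ L (g z₁) := hEq.to_localInverse.differentiableAt
  exact hdL.congr_of_eventuallyEq hev

private lemma stmt13_inv_diffOn {g : ℂ → ℂ}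
    (hg : DifferentiableOn ℂ g (Metric.ball (0:ℂ) 1))
    (hinj : Set.InjOn g (Metric.ball (0:ℂ) 1)) :
    DifferentiableOn ℂ (Function.invFunOn g (Metric.ball (0:ℂ) 1))
      (g '' Metric.ball (0:ℂ) 1) := by
  set G := Function.invFunOn g (Metric.ball (0:ℂ) 1) with hGdef
  set Ω := g '' Metric.ball (0:ℂ) 1 with hΩdef
  have hopen := stmt13_open_image hg hinj
  have hΩopen : IsOpen Ω := hopen _ subset_rfl isOpen_ball
  have hGleft : ∀ z ∈ Metric.ball (0:ℂ) 1, G (g z) = z :=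
    fun z hz => hinj.leftInvOn_invFunOn hz
  have hGcont : ContinuousOn G Ω := by
    rw [_root_.continuousOn_iff']
    intro t ht
    refine ⟨g '' (t ∩ Metric.ball (0:ℂ) 1), hopen _ inter_subset_right
      (ht.inter isOpen_ball), ?_⟩
    ext y
    constructor
    · rintro ⟨hyt, z, hz, rfl⟩
      refine ⟨⟨z, ⟨?_, hz⟩, rfl⟩, ⟨z, hz, rfl⟩⟩
      rwa [mem_preimage, hGleft z hz] at hyt
    · rintro ⟨⟨z, ⟨hzt, hz⟩, rfl⟩, hyΩ⟩
      refine ⟨?_, hyΩ⟩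
      rw [mem_preimage, hGleft z hz]; exact hzt
  have han : AnalyticOnNhd ℂ g (Metric.ball (0:ℂ) 1) := hg.analyticOnNhd isOpen_ball
  intro y hy
  obtain ⟨z₀, hz₀, rfl⟩ := hy
  suffices h : DifferentiableAt ℂ G (g z₀) from h.differentiableWithinAt
  have hdan : AnalyticAt ℂ (deriv g) z₀ := han.deriv z₀ hz₀
  have hnotall : ¬ (∀ᶠ z in nhds z₀, deriv g z = 0) := by
    intro hcontra
    obtain ⟨ε, hε, hball⟩ := Metric.eventually_nhds_iff_ball.mp
      (hcontra.and (isOpen_ball.eventually_mem hz₀))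
    have hsub' : Metric.ball z₀ ε ⊆ Metric.ball (0:ℂ) 1 := fun x hx => (hball x hx).2
    set ε' := min ε (1/2) with hε'
    have hε'pos : 0 < ε' := lt_min hε (by norm_num)
    have hmem2 : z₀ + (ε'/2 : ℝ) ∈ Metric.ball z₀ ε := by
      rw [Metric.mem_ball, dist_eq_norm]
      have : ‖(z₀ + (ε'/2 : ℝ)) - z₀‖ = ε'/2 := by
        rw [add_sub_cancel_left, Complex.norm_real, Real.norm_eq_abs,
          _root_.abs_of_nonneg (by positivity)]
      rw [this]
      calc ε'/2 < ε' := by linarith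
      _ ≤ ε := min_le_left _ _
    have hconst : g (z₀ + (ε'/2 : ℝ)) = g z₀ := by
      refine (convex_ball z₀ ε).is_const_of_fderivWithin_eq_zero (hg.mono hsub')
        ?_ hmem2 (mem_ball_self hε)
      intro x hx
      rw [fderivWithin_of_isOpen isOpen_ball hx]
      ext
      simp [fderiv_apply_one_eq_deriv, (hball x hx).1]
    have hne0 : z₀ + (ε'/2 : ℝ) ≠ z₀ := by
      intro h
      have : ((ε'/2 : ℝ) : ℂ) = 0 := by linear_combination h
      rw [Complex.ofReal_eq_zero] at this
      linarith
    exact hne0 (hinj (hsub' hmem2) hz₀ hconst)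
  have hpunct : ∀ᶠ z in nhdsWithin z₀ {z₀}ᶜ, deriv g z ≠ 0 :=
    hdan.eventually_eq_zero_or_eventually_ne_zero.resolve_left hnotall
  have hmem : ∀ᶠ z in nhds z₀, (z ∈ ({z₀}ᶜ : Set ℂ) → deriv g z ≠ 0)
      ∧ z ∈ Metric.ball (0:ℂ) 1 :=
    (eventually_nhdsWithin_iff.mp hpunct).and (isOpen_ball.eventually_mem hz₀)
  obtain ⟨ε, hε, hb⟩ := Metric.eventually_nhds_iff_ball.mp hmem
  have hW : IsOpen (g '' Metric.ball z₀ ε) :=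
    hopen _ (fun x hx => (hb x hx).2) isOpen_ball
  have hWnhds : g '' Metric.ball z₀ ε ∈ nhds (g z₀) :=
    hW.mem_nhds ⟨z₀, mem_ball_self hε, rfl⟩
  have hGev : ∀ᶠ y in nhdsWithin (g z₀) {g z₀}ᶜ, DifferentiableAt ℂ G y := by
    filter_upwards [mem_nhdsWithin_of_mem_nhds hWnhds, self_mem_nhdsWithin] with y hyW hyne
    obtain ⟨z, hz, rfl⟩ := hyW
    have hzne : z ∈ ({z₀}ᶜ : Set ℂ) := by
      intro h
      apply hyne
      rw [Set.mem_singleton_iff.mp h]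
      exact rfl
    exact stmt13_inv_diff_at hg hinj (hb z hz).2 ((hb z hz).1 hzne)
  have hGc : ContinuousAt G (g z₀) := hGcont.continuousAt (hΩopen.mem_nhds ⟨z₀, hz₀, rfl⟩)
  exact (analyticAt_of_differentiable_on_punctured_nhds_of_continuousAt
    hGev hGc).differentiableAt

private lemma stmt13_part2 {g : ℂ → ℂ}
    (hg : DifferentiableOn ℂ g (Metric.ball (0:ℂ) 1))
    (hinj : Set.InjOn g (Metric.ball (0:ℂ) 1))
    (hconv : Convex ℝ (g '' Metric.ball (0:ℂ) 1)) :
    ‖deriv g 0‖ ≤ 2 * Metric.infDist (g 0) (frontier (g '' Metric.ball (0:ℂ) 1)) := by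
  set Ω := g '' Metric.ball (0:ℂ) 1 with hΩdef
  have hopen := stmt13_open_image hg hinj
  have hΩopen : IsOpen Ω := hopen _ subset_rfl isOpen_ball
  have h0mem : (0:ℂ) ∈ Metric.ball (0:ℂ) 1 := by simp
  have h2mem : (1/2:ℂ) ∈ Metric.ball (0:ℂ) 1 := by
    rw [mem_ball_zero_iff, show (1/2 : ℂ) = ((1/2 : ℝ) : ℂ) by norm_num, Complex.norm_real,
      Real.norm_eq_abs, _root_.abs_of_nonneg (by norm_num)]
    norm_num
  have h0Ω : g 0 ∈ Ω := ⟨0, h0mem, rfl⟩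
  set G := Function.invFunOn g (Metric.ball (0:ℂ) 1) with hGdef
  have hGleft : ∀ z ∈ Metric.ball (0:ℂ) 1, G (g z) = z :=
    fun z hz => hinj.leftInvOn_invFunOn hz
  have hGmem : ∀ y ∈ Ω, G y ∈ Metric.ball (0:ℂ) 1 := by
    rintro y ⟨z, hz, rfl⟩; rw [hGleft z hz]; exact hz
  -- frontier is nonempty
  have hfr : (frontier Ω).Nonempty := by
    by_contra h
    rw [not_nonempty_iff_eq_empty] at h
    have hclopen : IsClopen Ω := isClopen_iff_frontier_eq_empty.mpr h
    rcases isClopen_iff.mp hclopen with h' | h'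
    · rw [h'] at h0Ω; exact h0Ω
    · have hGdiff : Differentiable ℂ G := by
        rw [← differentiableOn_univ, ← h']
        exact stmt13_inv_diffOn hg hinj
      have hbd : Bornology.IsBounded (Set.range G) := by
        refine (Metric.isBounded_ball (x := (0:ℂ)) (r := 1)).subset ?_
        rintro - ⟨y, rfl⟩
        exact hGmem y (by rw [h']; trivial)
      have := hGdiff.apply_eq_apply_of_bounded hbd (g 0) (g (1/2))
      rw [hGleft 0 h0mem, hGleft _ h2mem] at this
      norm_num at this
  obtain ⟨p, hpfr, hpd⟩ := isClosed_frontier.exists_infDist_eq_dist hfr (g 0)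
  have hpΩ : p ∉ Ω := by
    rw [hΩopen.frontier_eq] at hpfr
    exact hpfr.2
  obtain ⟨l, hl⟩ := geometric_hahn_banach_open_point hconv hΩopen hpΩ
  set c₀ : ℂ := ((l 1 : ℝ) : ℂ) + ((l Complex.I : ℝ) : ℂ) * Complex.I with hc₀def
  have hlc : ∀ u : ℂ, ((starRingEnd ℂ) c₀ * u).re = l u := by
    intro u
    have h1 : ((starRingEnd ℂ) c₀ * u).re = l 1 * u.re + l Complex.I * u.im := by
      simp [hc₀def, Complex.mul_re, Complex.add_re, Complex.add_im, Complex.mul_I_re,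
        Complex.mul_I_im]
    rw [h1]
    conv_rhs => rw [show u = u.re • (1:ℂ) + u.im • Complex.I by
      simp [Complex.real_smul]]
    rw [map_add, map_smul, map_smul, smul_eq_mul, smul_eq_mul]
    ring
  have hc₀ : c₀ ≠ 0 := by
    intro h
    have h1 : l (g 0) = 0 := by rw [← hlc]; simp [h]
    have h2 : l p = 0 := by rw [← hlc]; simp [h]
    have := hl _ h0Ω
    rw [h1, h2] at this
    exact lt_irrefl 0 this
  set s₀ : ℝ := l p - l (g 0) with hs₀def
  have hs₀ : 0 < s₀ := sub_pos.2 (hl _ h0Ω)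
  set v : ℂ → ℂ := fun z => (starRingEnd ℂ) c₀ * (g z - g 0) with hvdef
  have hre : ∀ z ∈ Metric.ball (0:ℂ) 1, (v z).re < s₀ := by
    intro z hz
    have h1 : l (g z) < l p := hl _ ⟨z, hz, rfl⟩
    have h2 : (v z).re = l (g z) - l (g 0) := by
      rw [hvdef]
      simp only [mul_sub, Complex.sub_re, hlc]
    rw [h2, hs₀def] at *
    linarith
  have hden : ∀ z ∈ Metric.ball (0:ℂ) 1, ((2*s₀ : ℝ) : ℂ) - v z ≠ 0 := by
    intro z hz h
    have h1 : (((2*s₀ : ℝ) : ℂ) - v z).re = 2*s₀ - (v z).re := by simp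
    rw [h] at h1
    simp only [Complex.zero_re] at h1
    have := hre z hz
    linarith
  set F : ℂ → ℂ := fun z => v z / (((2*s₀ : ℝ) : ℂ) - v z) with hFdef
  have hF0 : F 0 = 0 := by simp [hFdef, hvdef]
  have hvdiff : DifferentiableOn ℂ v (Metric.ball (0:ℂ) 1) :=
    ((hg.sub_const _).const_mul _)
  have hFdiff : DifferentiableOn ℂ F (Metric.ball (0:ℂ) 1) :=
    hvdiff.div ((differentiableOn_const _).sub hvdiff) hden
  have hFmaps : Set.MapsTo F (Metric.ball (0:ℂ) 1) (Metric.ball (F 0) 1) := by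
    intro z hz
    rw [hF0, mem_ball_zero_iff, hFdef]
    simp only
    rw [norm_div, div_lt_one (norm_pos_iff.mpr (hden z hz))]
    have h1 : ‖v z‖^2 < ‖((2*s₀ : ℝ) : ℂ) - v z‖^2 := by
      rw [Complex.sq_norm, Complex.sq_norm,
        Complex.normSq_apply, Complex.normSq_apply]
      have h2 : (((2*s₀:ℝ):ℂ) - v z).re = 2*s₀ - (v z).re := by simp
      have h3 : (((2*s₀:ℝ):ℂ) - v z).im = -(v z).im := by simp
      rw [h2, h3]
      nlinarith [hre z hz, hs₀]
    have h4 : (0:ℝ) ≤ ‖v z‖ := norm_nonneg _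
    nlinarith [norm_nonneg (((2*s₀ : ℝ) : ℂ) - v z)]
  have hSch : ‖deriv F 0‖ ≤ 1 / 1 :=
    Complex.norm_deriv_le_div_of_mapsTo_ball hFdiff (hFmaps.mono_right ball_subset_closedBall) one_pos
  -- compute deriv F 0
  have hg0 : HasDerivAt g (deriv g 0) 0 :=
    (hg.differentiableAt (isOpen_ball.mem_nhds h0mem)).hasDerivAt
  have hv0 : HasDerivAt v ((starRingEnd ℂ) c₀ * deriv g 0) 0 := by
    simpa using (hg0.sub_const (g 0)).const_mul ((starRingEnd ℂ) c₀)
  have hw0 : HasDerivAt (fun z => ((2*s₀ : ℝ) : ℂ) - v z) (-((starRingEnd ℂ) c₀ * deriv g 0)) 0 := by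
    simpa using hv0.const_sub ((2*s₀ : ℝ) : ℂ)
  have hF0' : HasDerivAt F (((starRingEnd ℂ) c₀ * deriv g 0 * (((2*s₀ : ℝ) : ℂ) - v 0) -
      v 0 * -((starRingEnd ℂ) c₀ * deriv g 0)) / (((2*s₀ : ℝ) : ℂ) - v 0)^2) 0 :=
    hv0.div hw0 (hden 0 h0mem)
  have hv00 : v 0 = 0 := by simp [hvdef]
  have hderivF : deriv F 0 = (starRingEnd ℂ) c₀ * deriv g 0 / ((2*s₀ : ℝ) : ℂ) := by
    have hs₀ne : ((s₀ : ℝ) : ℂ) ≠ 0 := Complex.ofReal_ne_zero.mpr hs₀.ne'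
    rw [hF0'.deriv, hv00]
    push_cast
    field_simp
    ring
  have hnorm : ‖c₀‖ * ‖deriv g 0‖ / (2*s₀) ≤ 1 := by
    have h1 : ‖deriv F 0‖ = ‖c₀‖ * ‖deriv g 0‖ / (2*s₀) := by
      rw [hderivF, norm_div, norm_mul, RCLike.norm_conj, Complex.norm_real, Real.norm_eq_abs,
        _root_.abs_of_pos (by linarith)]
    rw [h1] at hSch
    linarith
  have hsd : s₀ ≤ ‖c₀‖ * Metric.infDist (g 0) (frontier Ω) := by
    have h1 : s₀ = ((starRingEnd ℂ) c₀ * (p - g 0)).re := by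
      rw [hs₀def, mul_sub, Complex.sub_re, hlc, hlc]
    have h2 : ((starRingEnd ℂ) c₀ * (p - g 0)).re ≤ ‖(starRingEnd ℂ) c₀ * (p - g 0)‖ :=
      Complex.re_le_norm _
    have h3 : ‖(starRingEnd ℂ) c₀ * (p - g 0)‖ = ‖c₀‖ * ‖p - g 0‖ := by
      rw [norm_mul, RCLike.norm_conj]
    have h4 : ‖p - g 0‖ = Metric.infDist (g 0) (frontier Ω) := by
      rw [hpd, dist_eq_norm, norm_sub_rev]
    rw [h1]
    calc ((starRingEnd ℂ) c₀ * (p - g 0)).re ≤ ‖(starRingEnd ℂ) c₀ * (p - g 0)‖ := h2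
    _ = ‖c₀‖ * Metric.infDist (g 0) (frontier Ω) := by rw [h3, h4]
  have hc₀pos : 0 < ‖c₀‖ := norm_pos_iff.mpr hc₀
  have h5 : ‖c₀‖ * ‖deriv g 0‖ ≤ 2 * s₀ := by
    rw [div_le_one (by linarith)] at hnorm
    linarith
  nlinarith [norm_nonneg (deriv g 0)]

private lemma stmt13_part1 {g f : ℂ → ℂ} {b : ℕ → ℂ}
    (hg : DifferentiableOn ℂ g (Metric.ball (0:ℂ) 1))
    (hinj : Set.InjOn g (Metric.ball (0:ℂ) 1))
    (hconv : Convex ℝ (g '' Metric.ball (0:ℂ) 1))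
    (hf : ∀ z ∈ Metric.ball (0:ℂ) 1, HasSum (fun m : ℕ => b m * z ^ m) (f z))
    (hmapsf : ∀ z ∈ Metric.ball (0:ℂ) 1, f z ∈ g '' Metric.ball (0:ℂ) 1)
    (hf0 : f 0 = g 0)
    (n : ℕ) (hn : 1 ≤ n) : ‖b n‖ ≤ ‖deriv g 0‖ := by
  have hn0' : n ≠ 0 := Nat.one_le_iff_ne_zero.mp hn
  have npos : 0 < n := Nat.pos_of_ne_zero hn0'
  have hn0 : (n:ℂ) ≠ 0 := Nat.cast_ne_zero.mpr hn0'
  have h0mem : (0:ℂ) ∈ Metric.ball (0:ℂ) 1 := by simp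
  set ω : ℂ := Complex.exp (2 * Real.pi * Complex.I / n) with hωdef
  have hprim : IsPrimitiveRoot ω n := Complex.isPrimitiveRoot_exp n hn0'
  have hωn : ω ^ n = 1 := hprim.pow_eq_one
  have hωnorm : ‖ω‖ = 1 := by
    rw [hωdef, Complex.norm_exp]
    have h1 : (2 * (Real.pi:ℂ) * Complex.I / n).re = 0 := by
      simp [Complex.div_re]
    rw [h1, Real.exp_zero]
  have hωz : ∀ (z : ℂ) (k : ℕ), z ∈ Metric.ball (0:ℂ) 1 → ω^k * z ∈ Metric.ball (0:ℂ) 1 := by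
    intro z k hz
    rw [mem_ball_zero_iff] at *
    rw [norm_mul, norm_pow, hωnorm, one_pow, one_mul]
    exact hz
  have hrsum : ∀ m : ℕ, ∑ k ∈ Finset.range n, (ω ^ m) ^ k = if n ∣ m then (n:ℂ) else 0 := by
    intro m
    by_cases hd : n ∣ m
    · rw [if_pos hd]
      have h1 : ω ^ m = 1 := (hprim.pow_eq_one_iff_dvd m).mpr hd
      simp [h1]
    · rw [if_neg hd]
      have h1 : ω ^ m ≠ 1 := fun h => hd ((hprim.pow_eq_one_iff_dvd m).mp h)
      have h2 : (ω ^ m) ^ n - 1 = 0 := by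
        rw [← pow_mul, mul_comm, pow_mul, hωn, one_pow, sub_self]
      rw [geom_sum_eq h1, h2, zero_div]
  have hKey : ∀ z ∈ Metric.ball (0:ℂ) 1, HasSum (fun j : ℕ => b (n*j) * (z^n)^j)
      ((n:ℂ)⁻¹ * ∑ k ∈ Finset.range n, f (ω^k * z)) := by
    intro z hz
    have h2 : HasSum (fun m : ℕ => ∑ k ∈ Finset.range n, b m * (ω^k * z)^m)
        (∑ k ∈ Finset.range n, f (ω^k * z)) :=
      hasSum_sum fun k _ => hf _ (hωz z k hz)
    have h3 : (fun m : ℕ => ∑ k ∈ Finset.range n, b m * (ω^k * z)^m)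
        = fun m => if n ∣ m then (n:ℂ) * (b m * z^m) else 0 := by
      funext m
      calc ∑ k ∈ Finset.range n, b m * (ω^k * z)^m
          = ∑ k ∈ Finset.range n, (b m * z^m) * (ω^m)^k := by
            refine Finset.sum_congr rfl fun k _ => ?_
            rw [mul_pow, ← pow_mul, ← pow_mul, mul_comm k m]
            ring
        _ = (b m * z^m) * ∑ k ∈ Finset.range n, (ω^m)^k := by rw [Finset.mul_sum]
        _ = if n ∣ m then (n:ℂ) * (b m * z^m) else 0 := by
            rw [hrsum m]; split_ifs <;> ring
    rw [h3] at h2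
    have hinj' : Function.Injective (fun j : ℕ => n * j) := fun a c h => by
      exact Nat.eq_of_mul_eq_mul_left npos h
    have hzero : ∀ m, m ∉ Set.range (fun j : ℕ => n * j) →
        (if n ∣ m then (n:ℂ) * (b m * z^m) else 0) = 0 := by
      intro m hm
      rw [if_neg]
      intro hd
      obtain ⟨c, rfl⟩ := hd
      exact hm ⟨c, rfl⟩
    have h4 : HasSum ((fun m => if n ∣ m then (n:ℂ) * (b m * z^m) else 0) ∘ (fun j : ℕ => n * j))
        (∑ k ∈ Finset.range n, f (ω^k * z)) := (hinj'.hasSum_iff hzero).mpr h2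
    have h5 : ((fun m => if n ∣ m then (n:ℂ) * (b m * z^m) else 0) ∘ (fun j : ℕ => n * j))
        = fun j => (n:ℂ) * (b (n*j) * (z^n)^j) := by
      funext j
      simp only [Function.comp_apply]
      rw [if_pos (dvd_mul_right n j), pow_mul]
    rw [h5] at h4
    have h6 := h4.mul_left (n:ℂ)⁻¹
    have h7 : (fun j : ℕ => (n:ℂ)⁻¹ * ((n:ℂ) * (b (n*j) * (z^n)^j)))
        = fun j => b (n*j) * (z^n)^j := by
      funext j
      rw [inv_mul_cancel_left₀ hn0]
    rwa [h7] at h6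
  -- the power series Φ
  set c' : ℕ → ℂ := fun j => b (n * j) with hc'def
  set p : FormalMultilinearSeries ℂ ℂ ℂ := FormalMultilinearSeries.ofScalars ℂ c' with hpdef
  have hroot : ∀ ζ ∈ Metric.ball (0:ℂ) 1, ∃ z ∈ Metric.ball (0:ℂ) 1, z^n = ζ := by
    intro ζ hζ
    obtain ⟨z, hzn⟩ := IsAlgClosed.exists_pow_nat_eq ζ npos
    refine ⟨z, ?_, hzn⟩
    rw [mem_ball_zero_iff] at *
    by_contra h
    push_neg at h
    have h1 : (1:ℝ) ≤ ‖z‖^n := one_le_pow₀ h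
    rw [← norm_pow, hzn] at h1
    linarith
  have hsummable : ∀ ζ ∈ Metric.ball (0:ℂ) 1, Summable (fun j => c' j * ζ^j) := by
    intro ζ hζ
    obtain ⟨z, hz, hzn⟩ := hroot ζ hζ
    have h1 := hKey z hz
    rw [hzn] at h1
    exact h1.summable
  have hrad : 1 ≤ p.radius := by
    refine ENNReal.le_of_forall_nnreal_lt fun r hr => ?_
    have hrlt : (r:ℝ) < 1 := by exact_mod_cast hr
    have hmem : ((r:ℝ):ℂ) ∈ Metric.ball (0:ℂ) 1 := by
      rw [mem_ball_zero_iff, Complex.norm_real, Real.norm_eq_abs,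
        _root_.abs_of_nonneg r.coe_nonneg]
      exact hrlt
    have hs := hsummable _ hmem
    have h2 := (hs.tendsto_atTop_zero).norm
    simp only [norm_mul, norm_pow, Complex.norm_real, Real.norm_eq_abs,
      _root_.abs_of_nonneg r.coe_nonneg, norm_zero] at h2
    refine p.le_radius_of_tendsto (l := 0) ?_
    have h3 : ∀ j : ℕ, ‖p j‖ = ‖c' j‖ := fun j => by
      rw [hpdef, FormalMultilinearSeries.ofScalars_norm]
    simp only [h3]
    exact h2
  have hpos : 0 < p.radius := lt_of_lt_of_le one_pos hrad
  have hballp := p.hasFPowerSeriesOnBall hpos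
  set Φ : ℂ → ℂ := p.sum with hΦdef
  have hsubset : Metric.ball (0:ℂ) 1 ⊆ Metric.eball (0:ℂ) p.radius := by
    intro ζ hζ
    rw [mem_ball_zero_iff] at hζ
    rw [EMetric.mem_ball, edist_zero_right]
    calc (‖ζ‖₊ : ENNReal) < 1 := by exact_mod_cast hζ
    _ ≤ p.radius := hrad
  have hΦdiff : DifferentiableOn ℂ Φ (Metric.ball (0:ℂ) 1) :=
    (hballp.differentiableOn).mono hsubset
  have hΦval : ∀ ζ ∈ Metric.ball (0:ℂ) 1, HasSum (fun j => c' j * ζ^j) (Φ ζ) := by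
    intro ζ hζ
    have h1 : Φ ζ = ∑' j, c' j * ζ^j := by
      rw [hΦdef, FormalMultilinearSeries.sum]
      congr 1
      funext j
      rw [hpdef, FormalMultilinearSeries.ofScalars_apply_eq, smul_eq_mul]
    rw [h1]
    exact (hsummable ζ hζ).hasSum
  have hΦmaps : Set.MapsTo Φ (Metric.ball (0:ℂ) 1) (g '' Metric.ball (0:ℂ) 1) := by
    intro ζ hζ
    obtain ⟨z, hz, hzn⟩ := hroot ζ hζ
    have h1 := hKey z hz
    rw [hzn] at h1
    have hval : Φ ζ = (n:ℂ)⁻¹ * ∑ k ∈ Finset.range n, f (ω^k * z) := (hΦval ζ hζ).unique h1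
    rw [hval]
    have h2 : (n:ℂ)⁻¹ * ∑ k ∈ Finset.range n, f (ω^k * z)
        = ∑ k ∈ Finset.range n, ((n:ℝ)⁻¹ : ℝ) • f (ω^k * z) := by
      rw [← Finset.smul_sum, Complex.real_smul]
      push_cast
      ring
    rw [h2]
    refine hconv.sum_mem (fun k _ => by positivity) ?_ (fun k _ => hmapsf _ (hωz z k hz))
    rw [Finset.sum_const, Finset.card_range, nsmul_eq_mul]
    field_simp
  have hΦ0 : Φ 0 = g 0 := by
    have h1 := hΦval 0 h0mem
    have h2 : HasSum (fun j => c' j * (0:ℂ)^j) (c' 0 * (0:ℂ)^0) :=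
      hasSum_single 0 (fun j hj => by simp [zero_pow hj])
    have h3 : Φ 0 = c' 0 := by
      have := h1.unique h2
      simpa using this
    have h4 := hf 0 h0mem
    have h5 : HasSum (fun m => b m * (0:ℂ)^m) (b 0 * (0:ℂ)^0) :=
      hasSum_single 0 (fun m hm => by simp [zero_pow hm])
    have h6 : f 0 = b 0 := by simpa using h4.unique h5
    rw [h3, show c' 0 = b 0 by rw [hc'def]; simp, ← h6, hf0]
  have hderivΦ : deriv Φ 0 = b n := by
    rw [(hballp.hasFPowerSeriesAt).deriv, hpdef, FormalMultilinearSeries.ofScalars_apply_eq]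
    simp [hc'def]
  -- Schwarz lemma applied to G ∘ Φ
  set G := Function.invFunOn g (Metric.ball (0:ℂ) 1) with hGdef
  have hGleft : ∀ z ∈ Metric.ball (0:ℂ) 1, G (g z) = z :=
    fun z hz => hinj.leftInvOn_invFunOn hz
  have hGmem : ∀ y ∈ g '' Metric.ball (0:ℂ) 1, G y ∈ Metric.ball (0:ℂ) 1 := by
    rintro y ⟨z, hz, rfl⟩; rw [hGleft z hz]; exact hz
  have hGdiff := stmt13_inv_diffOn hg hinj
  set vfun : ℂ → ℂ := fun ζ => G (Φ ζ) with hvdef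
  have hv0 : vfun 0 = 0 := by
    rw [hvdef]
    simp only
    rw [hΦ0, hGleft 0 h0mem]
  have hvdiff : DifferentiableOn ℂ vfun (Metric.ball (0:ℂ) 1) :=
    hGdiff.comp hΦdiff hΦmaps
  have hvmaps : Set.MapsTo vfun (Metric.ball (0:ℂ) 1) (Metric.ball (vfun 0) 1) := by
    intro ζ hζ
    rw [hv0]
    exact hGmem _ (hΦmaps hζ)
  have hSch : ‖deriv vfun 0‖ ≤ 1 / 1 :=
    Complex.norm_deriv_le_div_of_mapsTo_ball hvdiff (hvmaps.mono_right ball_subset_closedBall) one_pos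
  have hΦeq : ∀ ζ ∈ Metric.ball (0:ℂ) 1, Φ ζ = g (vfun ζ) := by
    intro ζ hζ
    obtain ⟨z, hz, hgz⟩ := hΦmaps hζ
    rw [hvdef]
    simp only
    rw [← hgz, hGleft z hz]
  have hd1 : DifferentiableAt ℂ g 0 := hg.differentiableAt (isOpen_ball.mem_nhds h0mem)
  have hd2 : DifferentiableAt ℂ vfun 0 := hvdiff.differentiableAt (isOpen_ball.mem_nhds h0mem)
  have hcomp : deriv Φ 0 = deriv g 0 * deriv vfun 0 := by
    have hev : Φ =ᶠ[nhds 0] (g ∘ vfun) := by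
      filter_upwards [isOpen_ball.mem_nhds h0mem] with ζ hζ
      exact hΦeq ζ hζ
    rw [hev.deriv_eq, deriv_comp _ (by rw [hv0]; exact hd1) hd2, hv0]
  have hfinal : ‖b n‖ = ‖deriv g 0‖ * ‖deriv vfun 0‖ := by
    rw [← hderivΦ, hcomp, norm_mul]
  rw [hfinal]
  nlinarith [norm_nonneg (deriv g 0), norm_nonneg (deriv vfun 0), hSch]

/-- If `g` is analytic univalent on `𝔻` with convex image and `f = Σ b_n z^n` is subordinate
to `g`, then `|b_n| ≤ |g'(0)| ≤ 2 dist(g(0), ∂g(𝔻))` for all `n ≥ 1`. -/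
theorem stmt13 (g f : ℂ → ℂ) (b : ℕ → ℂ)
    (hg : DifferentiableOn ℂ g (Metric.ball (0:ℂ) 1))
    (hinj : Set.InjOn g (Metric.ball (0:ℂ) 1))
    (hconv : Convex ℝ (g '' Metric.ball (0:ℂ) 1))
    (hf : ∀ z ∈ Metric.ball (0:ℂ) 1, HasSum (fun n : ℕ => b n * z ^ n) (f z))
    (hsub : ∃ w : ℂ → ℂ, DifferentiableOn ℂ w (Metric.ball (0:ℂ) 1) ∧ w 0 = 0 ∧
      Set.MapsTo w (Metric.ball (0:ℂ) 1) (Metric.ball (0:ℂ) 1) ∧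
      ∀ z ∈ Metric.ball (0:ℂ) 1, f z = g (w z)) :
    ∀ n : ℕ, 1 ≤ n → ‖b n‖ ≤ ‖deriv g 0‖ ∧
      ‖deriv g 0‖ ≤ 2 * Metric.infDist (g 0) (frontier (g '' Metric.ball (0:ℂ) 1)) := by
  obtain ⟨w, hwdiff, hw0, hwmaps, hfw⟩ := hsub
  have hmapsf : ∀ z ∈ Metric.ball (0:ℂ) 1, f z ∈ g '' Metric.ball (0:ℂ) 1 := by
    intro z hz
    rw [hfw z hz]
    exact ⟨w z, hwmaps hz, rfl⟩
  have hf0 : f 0 = g 0 := by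
    rw [hfw 0 (by simp), hw0]
  intro n hn
  exact ⟨stmt13_part1 hg hinj hconv hf hmapsf hf0 n hn, stmt13_part2 hg hinj hconv⟩
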